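/- The iteration functor I : Optic(C) → Set is symmetric lax monoidal, with laxator ∇ : I(X,X') × I(Y,Y') → I(X⊗Y, X'⊗Y') given (up to symmetry isomorphisms) by (M, x₀, i) ∇ (M', x₀', i') = (M⊗M', x₀ ⊗ x₀', i ⊗ i'); this laxator satisfies the associativity and unit coherence conditions for a lax monoidal functor. -/

import Mathlib

open CategoryTheory MonoidalCategory

universe v u

variable {C : Type u} [Category.{v} C] [MonoidalCategory C] [SymmetricCategory C]

structure IterRep (X X' : C) where
  M : C
  x₀ : 𝟙_ C ⟶ M ⊗ X
  i : M ⊗ X' ⟶ M ⊗ X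

def IterRel (X X' : C) : IterRep X X' → IterRep X X' → Prop :=
  fun j₁ j₂ => ∃ h : j₁.M ⟶ j₂.M,
    j₂.x₀ = j₁.x₀ ≫ (h ▷ X) ∧ j₁.i ≫ (h ▷ X) = (h ▷ X') ≫ j₂.i

def IterQuot (X X' : C) : Type _ := Quot (IterRel X X')

/-- The laxator on representatives: `(M,x₀,i) ∇ (M',x₀',i') = (M⊗M', x₀⊗x₀', i⊗i')`
up to the symmetry (middle-four interchange) isomorphisms. -/
def nablaRep {X X' Y Y' : C} (a : IterRep X X') (b : IterRep Y Y') :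
    IterRep (X ⊗ Y) (X' ⊗ Y') where
  M := a.M ⊗ b.M
  x₀ := (λ_ (𝟙_ C)).inv ≫ (a.x₀ ⊗ₘ b.x₀) ≫ tensorμ a.M X b.M Y
  i := tensorμ a.M b.M X' Y' ≫ (a.i ⊗ₘ b.i) ≫ tensorμ a.M X b.M Y

/-- The unit element of `I(𝟙, 𝟙)`. -/
def unitIter : IterRep (𝟙_ C) (𝟙_ C) := ⟨𝟙_ C, (λ_ (𝟙_ C)).inv, 𝟙 _⟩

/-- The optic representative of a pair of structural isomorphisms, with trivial
residual. -/
def isoRep {P P' Q Q' : C} (u : P ≅ Q) (u' : Q' ≅ P') :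
    Σ M : C, (P ⟶ M ⊗ Q) × (M ⊗ Q' ⟶ P') :=
  ⟨𝟙_ C, u.hom ≫ (λ_ Q).inv, (λ_ Q').hom ≫ u'.hom⟩

/-- Action of such an optic representative on iteration representatives
(the functorial action of `I`). -/
def iterMapIso {P P' Q Q' : C} (r : Σ M : C, (P ⟶ M ⊗ Q) × (M ⊗ Q' ⟶ P'))
    (j : IterRep P P') : IterRep Q Q' where
  M := j.M ⊗ r.1
  x₀ := j.x₀ ≫ (j.M ◁ r.2.1) ≫ (α_ j.M r.1 Q).inv
  i := (α_ j.M r.1 Q').hom ≫ (j.M ◁ r.2.2) ≫ j.i ≫ (j.M ◁ r.2.1) ≫ (α_ j.M r.1 Q).inv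


open BraidedCategory in
theorem tensorμ_braided (X₁ X₂ Y₁ Y₂ : C) :
    (β_ (X₁ ⊗ X₂) (Y₁ ⊗ Y₂)).hom ≫ tensorμ Y₁ Y₂ X₁ X₂ =
      tensorμ X₁ X₂ Y₁ Y₂ ≫ ((β_ X₁ Y₁).hom ⊗ₘ (β_ X₂ Y₂).hom) := by
  simp only [tensorμ, braiding_tensor_left_hom, braiding_tensor_right_hom, MonoidalCategory.tensorHom_def]
  calc
    _ = 𝟙 _ ⊗≫ X₁ ◁ (β_ X₂ Y₁).hom ▷ Y₂ ⊗≫ (β_ X₁ Y₁).hom ▷ (X₂ ⊗ Y₂) ⊗≫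
        (Y₁ ⊗ X₁) ◁ (β_ X₂ Y₂).hom ⊗≫
        Y₁ ◁ ((β_ X₁ Y₂).hom ≫ (β_ Y₂ X₁).hom) ▷ X₂ ⊗≫ 𝟙 _ := by monoidal
    _ = _ := by rw [SymmetricCategory.symmetry]; monoidal

open BraidedCategory in
theorem tensorμ_braided' (A B P Q : C) :
    ((A ⊗ B) ◁ (β_ Q P).hom) ≫ tensorμ A B P Q ≫ (β_ (A ⊗ P) (B ⊗ Q)).hom =
      ((β_ A B).hom ▷ (Q ⊗ P)) ≫ tensorμ B A Q P := by
  simp only [tensorμ, braiding_tensor_left_hom, braiding_tensor_right_hom, MonoidalCategory.tensorHom_def]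
  calc
    _ = 𝟙 _ ⊗≫ A ◁ B ◁ (β_ Q P).hom ⊗≫
        A ◁ ((β_ B P).hom ≫ (β_ P B).hom) ▷ Q ⊗≫
        ((β_ A B).hom ▷ (P ⊗ Q) ≫ (B ⊗ A) ◁ (β_ P Q).hom) ⊗≫
        B ◁ (β_ A Q).hom ▷ P ⊗≫ 𝟙 _ := by monoidal
    _ = 𝟙 _ ⊗≫ A ◁ B ◁ ((β_ Q P).hom ≫ (β_ P Q).hom) ⊗≫
        (β_ A B).hom ▷ (Q ⊗ P) ⊗≫ B ◁ (β_ A Q).hom ▷ P ⊗≫ 𝟙 _ := by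
      rw [SymmetricCategory.symmetry, ← whisker_exchange]; monoidal
    _ = _ := by rw [SymmetricCategory.symmetry]; monoidal

lemma comp3_tensor {P Q R S U V : C} (f : P ⟶ Q) (g : Q ⟶ R) (h : R ⟶ S) (k : U ⟶ V) :
    (f ≫ g ≫ h) ⊗ₘ k = (f ▷ U) ≫ (g ⊗ₘ k) ≫ (h ▷ V) := by
  simp only [← tensorHom_id, ← id_tensorHom, tensorHom_comp_tensorHom, Category.comp_id, Category.id_comp]

lemma tensor_comp3 {P Q R S U V : C} (f : P ⟶ Q) (g : Q ⟶ R) (h : R ⟶ S) (k : U ⟶ V) :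
    k ⊗ₘ (f ≫ g ≫ h) = (U ◁ f) ≫ (k ⊗ₘ g) ≫ (V ◁ h) := by
  simp only [← tensorHom_id, ← id_tensorHom, tensorHom_comp_tensorHom, Category.comp_id, Category.id_comp]

lemma comp2_tensor {P Q R U V : C} (f : P ⟶ Q) (g : Q ⟶ R) (k : U ⟶ V) :
    (f ≫ g) ⊗ₘ k = (f ▷ U) ≫ (g ⊗ₘ k) := by
  simp only [← tensorHom_id, ← id_tensorHom, tensorHom_comp_tensorHom, Category.comp_id, Category.id_comp]

lemma tensor_comp2 {P Q R U V : C} (f : P ⟶ Q) (g : Q ⟶ R) (k : U ⟶ V) :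
    k ⊗ₘ (f ≫ g) = (U ◁ f) ≫ (k ⊗ₘ g) := by
  simp only [← tensorHom_id, ← id_tensorHom, tensorHom_comp_tensorHom, Category.comp_id, Category.id_comp]

/-- Reduce the action of a purely structural optic to a clean transport. -/
lemma iterMapIso_isoRep_quot {P P' Q Q' : C} (u : P ≅ Q) (u' : Q' ≅ P')
    (j : IterRep P P') :
    Quot.mk (IterRel Q Q') (iterMapIso (isoRep u u') j) =
      Quot.mk _ ⟨j.M, j.x₀ ≫ (j.M ◁ u.hom), (j.M ◁ u'.hom) ≫ j.i ≫ (j.M ◁ u.hom)⟩ := by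
  refine Quot.sound ⟨(ρ_ j.M).hom, ?_, ?_⟩ <;>
    · dsimp only [iterMapIso, isoRep]
      monoidal

/-- Well-definedness of the laxator in the left argument. -/
lemma nabla_rel_left {X X' Y Y' : C} {a₁ a₂ : IterRep X X'} (b : IterRep Y Y')
    (ha : IterRel X X' a₁ a₂) :
    IterRel (X ⊗ Y) (X' ⊗ Y') (nablaRep a₁ b) (nablaRep a₂ b) := by
  obtain ⟨h, hx, hi⟩ := ha
  have e1 : (h ▷ b.M) ▷ (X' ⊗ Y') ≫ tensorμ a₂.M b.M X' Y'
      = tensorμ a₁.M b.M X' Y' ≫ (h ▷ X') ▷ (b.M ⊗ Y') := by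
    have := tensorμ_natural h (𝟙 b.M) (𝟙 X') (𝟙 Y'); simpa using this
  have e2 : tensorμ a₁.M X b.M Y ≫ (h ▷ b.M) ▷ (X ⊗ Y)
      = (h ▷ X) ▷ (b.M ⊗ Y) ≫ tensorμ a₂.M X b.M Y := by
    have := tensorμ_natural h (𝟙 X) (𝟙 b.M) (𝟙 Y); simpa using this.symm
  have hi' : a₁.i ≫ (h ⊗ₘ 𝟙 X) = (h ⊗ₘ 𝟙 X') ≫ a₂.i := by simpa [tensorHom_id] using hi
  have mid : (a₁.i ⊗ₘ b.i) ≫ (h ▷ X) ▷ (b.M ⊗ Y) = (h ▷ X') ▷ (b.M ⊗ Y') ≫ (a₂.i ⊗ₘ b.i) := by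
    simp only [← tensorHom_id, tensorHom_comp_tensorHom, Category.comp_id, Category.id_comp, hi']
  refine ⟨h ▷ b.M, ?_, ?_⟩
  · dsimp only [nablaRep]
    rw [hx]
    slice_rhs 3 4 => rw [e2]
    simp only [← tensorHom_id, tensorHom_comp_tensorHom, Category.comp_id, Category.id_comp,
      Category.assoc]
    slice_rhs 2 3 => rw [tensorHom_comp_tensorHom]
    simp
  · dsimp only [nablaRep]
    slice_lhs 3 4 => rw [e2]
    slice_lhs 2 3 => rw [mid]
    slice_lhs 1 2 => rw [← e1]
    simp only [Category.assoc]

/-- Well-definedness of the laxator in the right argument. -/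
lemma nabla_rel_right {X X' Y Y' : C} (a : IterRep X X') {b₁ b₂ : IterRep Y Y'}
    (hb : IterRel Y Y' b₁ b₂) :
    IterRel (X ⊗ Y) (X' ⊗ Y') (nablaRep a b₁) (nablaRep a b₂) := by
  obtain ⟨h, hx, hi⟩ := hb
  have e1 : (a.M ◁ h) ▷ (X' ⊗ Y') ≫ tensorμ a.M b₂.M X' Y'
      = tensorμ a.M b₁.M X' Y' ≫ (a.M ⊗ X') ◁ (h ▷ Y') := by
    have := tensorμ_natural (𝟙 a.M) h (𝟙 X') (𝟙 Y'); simpa using this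
  have e2 : tensorμ a.M X b₁.M Y ≫ (a.M ◁ h) ▷ (X ⊗ Y)
      = (a.M ⊗ X) ◁ (h ▷ Y) ≫ tensorμ a.M X b₂.M Y := by
    have := tensorμ_natural (𝟙 a.M) (𝟙 X) h (𝟙 Y); simpa using this.symm
  have hi' : b₁.i ≫ (h ⊗ₘ 𝟙 Y) = (h ⊗ₘ 𝟙 Y') ≫ b₂.i := by simpa [tensorHom_id] using hi
  have mid : (a.i ⊗ₘ b₁.i) ≫ (a.M ⊗ X) ◁ (h ▷ Y) = (a.M ⊗ X') ◁ (h ▷ Y') ≫ (a.i ⊗ₘ b₂.i) := by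
    simp only [← id_tensorHom, ← tensorHom_id, tensorHom_comp_tensorHom, Category.comp_id,
      Category.id_comp, hi']
  refine ⟨a.M ◁ h, ?_, ?_⟩
  · dsimp only [nablaRep]
    rw [hx]
    slice_rhs 3 4 => rw [e2]
    simp only [← id_tensorHom, ← tensorHom_id, tensorHom_comp_tensorHom, Category.comp_id,
      Category.id_comp, Category.assoc]
    slice_rhs 2 3 => rw [tensorHom_comp_tensorHom]
    simp
  · dsimp only [nablaRep]
    slice_lhs 3 4 => rw [e2]
    slice_lhs 2 3 => rw [mid]
    slice_lhs 1 2 => rw [← e1]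
    simp only [Category.assoc]

lemma unit_left_rel {X X' : C} (a : IterRep X X') :
    Quot.mk (IterRel X X')
        (iterMapIso (isoRep (λ_ X) (λ_ X').symm) (nablaRep unitIter a)) =
      Quot.mk _ a := by
  rw [iterMapIso_isoRep_quot]
  apply Quot.sound
  have tu : tensorμ (𝟙_ C) (𝟙_ C) a.M X ≫ ((λ_ a.M).hom ⊗ₘ (λ_ X).hom)
      = ((λ_ (𝟙_ C)).hom ▷ (a.M ⊗ X)) ≫ (λ_ (a.M ⊗ X)).hom := by
    rw [tensor_left_unitality a.M X]; monoidal
  have tu' : tensorμ (𝟙_ C) (𝟙_ C) a.M X' ≫ ((λ_ a.M).hom ⊗ₘ (λ_ X').hom)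
      = ((λ_ (𝟙_ C)).hom ▷ (a.M ⊗ X')) ≫ (λ_ (a.M ⊗ X')).hom := by
    rw [tensor_left_unitality a.M X']; monoidal
  refine ⟨(λ_ a.M).hom, ?_, ?_⟩
  · dsimp only [nablaRep, unitIter, Iso.symm_hom]
    simp only [Category.assoc]
    rw [← tensorHom_def' (λ_ a.M).hom (λ_ X).hom, tu]
    rw [MonoidalCategory.tensorHom_def (λ_ (𝟙_ C)).inv a.x₀]
    simp only [Category.assoc]
    rw [whisker_exchange_assoc]
    simp
  · dsimp only [nablaRep, unitIter, Iso.symm_hom]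
    simp only [Category.assoc]
    rw [← tensorHom_def' (λ_ a.M).hom (λ_ X).hom, tu]
    rw [id_tensorHom]
    rw [whisker_exchange_assoc]
    have nat : 𝟙_ C ◁ a.i ≫ (λ_ (a.M ⊗ X)).hom = (λ_ (a.M ⊗ X')).hom ≫ a.i :=
      MonoidalCategory.leftUnitor_naturality a.i
    rw [nat]
    have str : (𝟙_ C ⊗ a.M) ◁ (λ_ X').inv ≫ tensorμ (𝟙_ C) a.M (𝟙_ C) X' ≫
        (λ_ (𝟙_ C)).hom ▷ (a.M ⊗ X') ≫ (λ_ (a.M ⊗ X')).hom = (λ_ a.M).hom ▷ X' := by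
      simp only [tensorμ]
      simp
    rw [reassoc_of% str]

lemma unit_right_rel {X X' : C} (a : IterRep X X') :
    Quot.mk (IterRel X X')
        (iterMapIso (isoRep (ρ_ X) (ρ_ X').symm) (nablaRep a unitIter)) =
      Quot.mk _ a := by
  rw [iterMapIso_isoRep_quot]
  apply Quot.sound
  have tu : tensorμ a.M X (𝟙_ C) (𝟙_ C) ≫ ((ρ_ a.M).hom ⊗ₘ (ρ_ X).hom)
      = ((a.M ⊗ X) ◁ (λ_ (𝟙_ C)).hom) ≫ (ρ_ (a.M ⊗ X)).hom := by
    rw [tensor_right_unitality a.M X]; monoidal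
  refine ⟨(ρ_ a.M).hom, ?_, ?_⟩
  · dsimp only [nablaRep, unitIter, Iso.symm_hom]
    simp only [Category.assoc]
    rw [← tensorHom_def' (ρ_ a.M).hom (ρ_ X).hom, tu]
    rw [tensorHom_def' a.x₀ (λ_ (𝟙_ C)).inv]
    simp only [Category.assoc]
    rw [← whisker_exchange_assoc]
    simp [← unitors_equal]
  · dsimp only [nablaRep, unitIter, Iso.symm_hom]
    simp only [Category.assoc]
    rw [← tensorHom_def' (ρ_ a.M).hom (ρ_ X).hom, tu]
    rw [tensorHom_id]
    rw [← whisker_exchange_assoc]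
    have nat : a.i ▷ 𝟙_ C ≫ (ρ_ (a.M ⊗ X)).hom = (ρ_ (a.M ⊗ X')).hom ≫ a.i :=
      MonoidalCategory.rightUnitor_naturality a.i
    rw [nat]
    have str : (a.M ⊗ 𝟙_ C) ◁ (ρ_ X').inv ≫ tensorμ a.M (𝟙_ C) X' (𝟙_ C) ≫
        (a.M ⊗ X') ◁ (λ_ (𝟙_ C)).hom ≫ (ρ_ (a.M ⊗ X')).hom = (ρ_ a.M).hom ▷ X' := by
      simp only [tensorμ]
      simp
      monoidal
    rw [reassoc_of% str]

open BraidedCategory in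
lemma symm_rel {X X' Y Y' : C} (a : IterRep X X') (b : IterRep Y Y') :
    Quot.mk (IterRel (Y ⊗ X) (Y' ⊗ X'))
        (iterMapIso (isoRep (β_ X Y) (β_ X' Y').symm) (nablaRep a b)) =
      Quot.mk _ (nablaRep b a) := by
  rw [iterMapIso_isoRep_quot]
  apply Quot.sound
  refine ⟨(β_ a.M b.M).hom, ?_, ?_⟩
  · dsimp only [nablaRep, Iso.symm_hom]
    simp only [Category.assoc]
    rw [← tensorHom_def' (β_ a.M b.M).hom (β_ X Y).hom, ← tensorμ_braided,
      braiding_naturality_assoc]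
    simp [unitors_inv_equal]
  · dsimp only [nablaRep, Iso.symm_hom]
    simp only [Category.assoc]
    rw [← tensorHom_def' (β_ a.M b.M).hom (β_ X Y).hom]
    rw [show tensorμ a.M X b.M Y ≫ ((β_ a.M b.M).hom ⊗ₘ (β_ X Y).hom)
        = (β_ (a.M ⊗ X) (b.M ⊗ Y)).hom ≫ tensorμ b.M Y a.M X from (tensorμ_braided _ _ _ _).symm]
    rw [braiding_naturality_assoc]
    slice_lhs 1 3 =>
      rw [← SymmetricCategory.braiding_swap_eq_inv_braiding, tensorμ_braided']
    simp

open BraidedCategory in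
lemma assoc_rel {X X' Y Y' Z Z' : C} (a : IterRep X X') (b : IterRep Y Y')
    (c : IterRep Z Z') :
    Quot.mk (IterRel (X ⊗ (Y ⊗ Z)) (X' ⊗ (Y' ⊗ Z')))
        (iterMapIso (isoRep (α_ X Y Z) (α_ X' Y' Z').symm)
          (nablaRep (nablaRep a b) c)) =
      Quot.mk _ (nablaRep a (nablaRep b c)) := by
  rw [iterMapIso_isoRep_quot]
  apply Quot.sound
  refine ⟨(α_ a.M b.M c.M).hom, ?_, ?_⟩
  · dsimp only [nablaRep, Iso.symm_hom]
    simp only [Category.assoc]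
    rw [← tensorHom_def' (α_ a.M b.M c.M).hom (α_ X Y Z).hom]
    rw [comp3_tensor ((λ_ (𝟙_ C)).inv) (a.x₀ ⊗ₘ b.x₀) (tensorμ a.M X b.M Y) c.x₀]
    rw [tensor_comp3 ((λ_ (𝟙_ C)).inv) (b.x₀ ⊗ₘ c.x₀) (tensorμ b.M Y c.M Z) a.x₀]
    simp only [Category.assoc]
    rw [tensor_associativity]
    rw [associator_naturality_assoc a.x₀ b.x₀ c.x₀]
    have hd : (λ_ (𝟙_ C)).inv ≫ 𝟙_ C ◁ (λ_ (𝟙_ C)).inv =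
        (λ_ (𝟙_ C)).inv ≫ ((λ_ (𝟙_ C)).inv ▷ 𝟙_ C) ≫ (α_ (𝟙_ C) (𝟙_ C) (𝟙_ C)).hom := by
      monoidal
    rw [reassoc_of% hd]
  · dsimp only [nablaRep, Iso.symm_hom]
    simp only [Category.assoc]
    rw [comp3_tensor (tensorμ a.M b.M X' Y') (a.i ⊗ₘ b.i) (tensorμ a.M X b.M Y) c.i]
    rw [tensor_comp3 (tensorμ b.M c.M Y' Z') (b.i ⊗ₘ c.i) (tensorμ b.M Y c.M Z) a.i]
    simp only [Category.assoc]
    rw [← tensorHom_def' (α_ a.M b.M c.M).hom (α_ X Y Z).hom]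
    rw [tensor_associativity]
    rw [associator_naturality_assoc a.i b.i c.i]
    rw [associator_monoidal_assoc]
    have hd : (((a.M ⊗ b.M) ⊗ c.M) ◁ (α_ X' Y' Z').inv) ≫
        ((α_ a.M b.M c.M).hom ⊗ₘ (α_ X' Y' Z').hom) =
        (α_ a.M b.M c.M).hom ▷ (X' ⊗ (Y' ⊗ Z')) := by
      monoidal
    rw [reassoc_of% hd]

/-- the iteration functor `I : Optic(C) → Set` is symmetric lax
monoidal: the laxator `∇` descends to the coend quotients, and it satisfies the
associativity, left/right unit, and symmetry coherence conditions for a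
symmetric lax monoidal functor (stated in the quotient, transported along the
`I`-image of the structural optics). -/
theorem iteration_lax_monoidal :
    (∀ X X' Y Y' : C, ∃ lax : IterQuot X X' → IterQuot Y Y' → IterQuot (X ⊗ Y) (X' ⊗ Y'),
      ∀ (a : IterRep X X') (b : IterRep Y Y'),
        lax (Quot.mk _ a) (Quot.mk _ b) = Quot.mk _ (nablaRep a b)) ∧
    (∀ (X X' Y Y' Z Z' : C) (a : IterRep X X') (b : IterRep Y Y') (c : IterRep Z Z'),
      Quot.mk (IterRel _ _)
          (iterMapIso (isoRep (α_ X Y Z) (α_ X' Y' Z').symm)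
            (nablaRep (nablaRep a b) c)) =
        Quot.mk _ (nablaRep a (nablaRep b c))) ∧
    (∀ (X X' : C) (a : IterRep X X'),
      Quot.mk (IterRel _ _)
          (iterMapIso (isoRep (λ_ X) (λ_ X').symm) (nablaRep unitIter a)) =
        Quot.mk _ a) ∧
    (∀ (X X' : C) (a : IterRep X X'),
      Quot.mk (IterRel _ _)
          (iterMapIso (isoRep (ρ_ X) (ρ_ X').symm) (nablaRep a unitIter)) =
        Quot.mk _ a) ∧
    (∀ (X X' Y Y' : C) (a : IterRep X X') (b : IterRep Y Y'),
      Quot.mk (IterRel _ _)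
          (iterMapIso (isoRep (β_ X Y) (β_ X' Y').symm) (nablaRep a b)) =
        Quot.mk _ (nablaRep b a)) := by
  refine ⟨?_, ?_, ?_, ?_, ?_⟩
  · intro X X' Y Y'
    refine ⟨Quot.lift
        (fun a => Quot.lift (fun b => Quot.mk (IterRel (X ⊗ Y) (X' ⊗ Y')) (nablaRep a b))
          (fun b₁ b₂ hb => Quot.sound (nabla_rel_right a hb)))
        (fun a₁ a₂ ha => funext fun qb =>
          Quot.inductionOn qb fun b => Quot.sound (nabla_rel_left b ha)), ?_⟩
    intro a b; rfl
  · intro X X' Y Y' Z Z' a b c; exact assoc_rel a b c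
  · intro X X' a; exact unit_left_rel a
  · intro X X' a; exact unit_right_rel a
  · intro X X' Y Y' a b; exact symm_rel a b
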